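/- Let (K,v) be a valued field, U ⊆ K a subset with 0, 1 ∈ U, U = -U, UU ⊆ U, U + U ⊆ d^{-1}U, dU ⊆ U, and (K \ U)^{-1} ⊆ d^{-1}U for some d ∈ K with v(d) > 0. Define O_n := {x ∈ K : xU ⊆ d^{-n}U} and O := ⋃_{n<ω} O_n. Then O is a valuation ring of K: it is a subring of K containing U, and for every x ∈ K^×, either x ∈ O or x^{-1} ∈ O. -/
import Mathlib


/-- Let `(K,v)` be a valued field and `U ⊆ K` a subset with `0, 1 ∈ U`, `U = -U`,
`U·U ⊆ U`, `U + U ⊆ d⁻¹·U`, `d·U ⊆ U` and `(K \ U)⁻¹ ⊆ d⁻¹·U`, for some `d ≠ 0`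
with `v(d) > 0` (multiplicatively `v d < 1`).  Define
`O_n := {x ∈ K : x·U ⊆ d⁻ⁿ·U}` (equivalently `dⁿ·x·U ⊆ U`) and `O := ⋃_n O_n`.
Then `O` is a valuation ring of `K`: a subring of `K` containing `U` such that
every nonzero `x ∈ K` has `x ∈ O` or `x⁻¹ ∈ O`. -/
theorem stmt_12 {K : Type*} [Field K] {Γ : Type*} [LinearOrderedCommGroupWithZero Γ]
    (v : Valuation K Γ) (U : Set K) (d : K) (hd0 : d ≠ 0) (hd : v d < 1)
    (hU0 : (0 : K) ∈ U) (hU1 : (1 : K) ∈ U)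
    (hUneg : ∀ x ∈ U, -x ∈ U)
    (hUU : ∀ x ∈ U, ∀ y ∈ U, x * y ∈ U)
    (hUadd : ∀ x ∈ U, ∀ y ∈ U, ∃ u ∈ U, x + y = d⁻¹ * u)
    (hdU : ∀ x ∈ U, d * x ∈ U)
    (hinv : ∀ x : K, x ∉ U → ∃ u ∈ U, x⁻¹ = d⁻¹ * u) :
    ∃ R : Subring K,
      (R : Set K) = {x : K | ∃ n : ℕ, ∀ u ∈ U, d ^ n * (x * u) ∈ U} ∧
      U ⊆ (R : Set K) ∧
      ∀ x : K, x ≠ 0 → x ∈ R ∨ x⁻¹ ∈ R := by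
  have hdpow : ∀ (k : ℕ) (a : K), a ∈ U → d ^ k * a ∈ U := by
    intro k
    induction k with
    | zero => intro a ha; simpa using ha
    | succ n ih =>
      intro a ha
      have h := hdU _ (ih a ha)
      have he : d ^ (n + 1) * a = d * (d ^ n * a) := by ring
      rw [he]; exact h
  refine ⟨{
    carrier := {x : K | ∃ n : ℕ, ∀ u ∈ U, d ^ n * (x * u) ∈ U}
    zero_mem' := ⟨0, fun u hu => by simpa using hU0⟩
    one_mem' := ⟨0, fun u hu => by simpa using hu⟩
    neg_mem' := by
      rintro x ⟨n, hx⟩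
      exact ⟨n, fun u hu => by
        have h : d ^ n * (-x * u) = -(d ^ n * (x * u)) := by ring
        rw [h]; exact hUneg _ (hx u hu)⟩
    mul_mem' := by
      rintro x y ⟨m, hx⟩ ⟨n, hy⟩
      refine ⟨m + n, fun u hu => ?_⟩
      have h : d ^ (m + n) * (x * y * u) = d ^ m * (x * (d ^ n * (y * u))) := by
        rw [pow_add]; ring
      rw [h]; exact hx _ (hy u hu)
    add_mem' := by
      rintro x y ⟨m, hx⟩ ⟨n, hy⟩
      refine ⟨m + n + 1, fun u hu => ?_⟩
      have ha : d ^ n * (d ^ m * (x * u)) ∈ U := hdpow n _ (hx u hu)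
      have hb : d ^ m * (d ^ n * (y * u)) ∈ U := hdpow m _ (hy u hu)
      obtain ⟨w, hw, hsum⟩ := hUadd _ ha _ hb
      have h : d ^ (m + n + 1) * ((x + y) * u)
          = d * (d ^ n * (d ^ m * (x * u)) + d ^ m * (d ^ n * (y * u))) := by
        rw [pow_add, pow_add]; ring
      rw [h, hsum, ← mul_assoc, mul_inv_cancel₀ hd0, one_mul]
      exact hw }, rfl, ?_, ?_⟩
  · intro x hx
    exact ⟨0, fun u hu => by simpa using hUU x hx u hu⟩
  · intro x hx0
    by_cases hx : x ∈ U
    · exact Or.inl ⟨0, fun u hu => by simpa using hUU x hx u hu⟩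
    · obtain ⟨u, hu, heq⟩ := hinv x hx
      refine Or.inr ⟨1, fun w hw => ?_⟩
      have h : d ^ 1 * (x⁻¹ * w) = d * d⁻¹ * (u * w) := by rw [heq]; ring
      rw [h, mul_inv_cancel₀ hd0, one_mul]
      exact hUU u hu w hw
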